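/- In the language containing the constant λ, the relative product of the LP-valid inferences and the K3-valid inferences is the set of all inferences: 𝕃ℙ⁺ | 𝕂₃⁺ = {Γ ⇒ Δ : Γ, Δ finite sets of formulas}. In particular, 𝕊𝕋⁺ ≠ 𝕃ℙ⁺ | 𝕂₃⁺. -/
import Mathlib

/-- Propositional formulas over a countably infinite set of variables,
with constants ⊤, ⊥, λ and connectives ¬, ∨, ∧. -/
inductive Fm : Type
  | var : ℕ → Fm
  | top : Fm
  | bot : Fm
  | lam : Fm
  | neg : Fm → Fm
  | disj : Fm → Fm → Fm
  | conj : Fm → Fm → Fm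
  deriving DecidableEq

/-- A function `v : Var → ℚ` is an SK-valuation if it takes values in {0, 1/2, 1}. -/
def SK (v : ℕ → ℚ) : Prop := ∀ p : ℕ, v p = 0 ∨ v p = 1/2 ∨ v p = 1

/-- Extension of a valuation to all formulas by the Strong Kleene scheme. -/
def eval (v : ℕ → ℚ) : Fm → ℚ
  | .var p => v p
  | .top => 1
  | .bot => 0
  | .lam => 1/2
  | .neg φ => 1 - eval v φ
  | .disj φ ψ => max (eval v φ) (eval v ψ)
  | .conj φ ψ => min (eval v φ) (eval v ψ)

/-- An inference is a pair of finite sets of formulas. -/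
abbrev Inference := Finset Fm × Finset Fm

def K3Valid (Γ Δ : Finset Fm) : Prop :=
  ∀ v : ℕ → ℚ, SK v → (∀ γ ∈ Γ, eval v γ = 1) → ∃ δ ∈ Δ, eval v δ = 1

def LPValid (Γ Δ : Finset Fm) : Prop :=
  ∀ v : ℕ → ℚ, SK v → (∀ γ ∈ Γ, eval v γ ≠ 0) → ∃ δ ∈ Δ, eval v δ ≠ 0

def STValid (Γ Δ : Finset Fm) : Prop :=
  ∀ v : ℕ → ℚ, SK v → (∀ γ ∈ Γ, eval v γ = 1) → ∃ δ ∈ Δ, eval v δ ≠ 0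

def TSValid (Γ Δ : Finset Fm) : Prop :=
  ∀ v : ℕ → ℚ, SK v → (∀ γ ∈ Γ, eval v γ ≠ 0) → ∃ δ ∈ Δ, eval v δ = 1

def K3plus : Set Inference := {I | K3Valid I.1 I.2}
def LPplus : Set Inference := {I | LPValid I.1 I.2}
def STplus : Set Inference := {I | STValid I.1 I.2}
def TSplus : Set Inference := {I | TSValid I.1 I.2}

/-- Relative product: the middle term is a single formula. -/
def RelProd (R S : Set Inference) : Set Inference :=
  {I | ∃ φ : Fm, (I.1, ({φ} : Finset Fm)) ∈ R ∧ (({φ} : Finset Fm), I.2) ∈ S}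

/-- Relative sum: for every single formula, one of the two components holds. -/
def RelSum (R S : Set Inference) : Set Inference :=
  {I | ∀ φ : Fm, (I.1, ({φ} : Finset Fm)) ∈ R ∨ (({φ} : Finset Fm), I.2) ∈ S}

theorem relProd_LP_K3_univ :
    RelProd LPplus K3plus = (Set.univ : Set Inference) ∧
    STplus ≠ RelProd LPplus K3plus := by
  have huniv : RelProd LPplus K3plus = (Set.univ : Set Inference) := by
    ext I
    simp only [Set.mem_univ, iff_true, RelProd, Set.mem_setOf_eq]
    refine ⟨Fm.lam, ?_, ?_⟩
    · intro v _ _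
      exact ⟨Fm.lam, Finset.mem_singleton_self _, by norm_num [eval]⟩
    · intro v _ h
      have := h Fm.lam (Finset.mem_singleton_self _)
      norm_num [eval] at this
  refine ⟨huniv, ?_⟩
  rw [huniv]
  intro h
  have : ((∅ : Finset Fm), ({Fm.bot} : Finset Fm)) ∈ STplus := by
    rw [h]; trivial
  have := this (fun _ => 0) (fun _ => Or.inl rfl) (by simp)
  simp [eval] at this
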